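/- Let r = (0, -15/8) and q₂ = (0, -(25/9)·4^n + 11/18) for n ≥ 1, and let L be the line of slope 3/4 through r. Then for any point w on L on the same side as positive x, |w r| + |r q₂| ≤ (√5/2)·|w q₂|. -/

import Mathlib

noncomputable def pt (x y : ℝ) : EuclideanSpace ℝ (Fin 2) :=
  (WithLp.equiv 2 (Fin 2 → ℝ)).symm ![x, y]

lemma dist_pt (a b c d : ℝ) :
    dist (pt a b) (pt c d) = Real.sqrt ((a - c)^2 + (b - d)^2) := by
  rw [EuclideanSpace.dist_eq, Fin.sum_univ_two]
  simp only [pt, WithLp.equiv_symm_apply, PiLp.toLp_apply, Matrix.cons_val_zero, Matrix.cons_val_one, Matrix.head_cons, Real.dist_eq, abs_mul_abs_self, sq]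

/-- For `w` on the line of slope 3/4 through `r = (0,-15/8)` on the positive-x
side, the detour from `w` via `r` to `q₂` is at most `(√5/2)·|w q₂|`. -/
theorem detour_via_r (n : ℕ) (hn : 1 ≤ n) (t : ℝ) (ht : 0 ≤ t) :
    dist (pt (4*t) (-15/8 + 3*t)) (pt 0 (-15/8))
      + dist (pt 0 (-15/8)) (pt 0 (-(25/9) * 4^n + 11/18))
    ≤ (Real.sqrt 5 / 2) *
      dist (pt (4*t) (-15/8 + 3*t)) (pt 0 (-(25/9) * 4^n + 11/18)) := by
  have h4 : (4:ℝ) ≤ 4^n := by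
    calc (4:ℝ) = 4^1 := by norm_num
    _ ≤ 4^n := by apply pow_le_pow_right₀ <;> norm_num [hn]
  set d : ℝ := -15/8 - (-(25/9) * 4^n + 11/18) with hd
  have hdpos : (0:ℝ) < d := by rw [hd]; nlinarith
  rw [dist_pt, dist_pt, dist_pt]
  have h1 : Real.sqrt ((4*t - 0)^2 + (-15/8 + 3*t - -15/8)^2) = 5*t := by
    rw [show (4*t - 0)^2 + (-15/8 + 3*t - -15/8)^2 = (5*t)^2 by ring]
    exact Real.sqrt_sq (by linarith)
  have h2 : Real.sqrt ((0 - 0:ℝ)^2 + (-15/8 - (-(25/9) * 4^n + 11/18))^2) = d := by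
    rw [show ((0:ℝ) - 0)^2 + (-15/8 - (-(25/9) * 4^n + 11/18))^2 = d^2 by rw [hd]; ring]
    exact Real.sqrt_sq hdpos.le
  rw [h1, h2]
  have hX : (4*t - 0)^2 + (-15/8 + 3*t - (-(25/9) * 4^n + 11/18))^2
      = 16*t^2 + (3*t + d)^2 := by rw [hd]; ring
  rw [hX]
  have key : 5*t + d ≤ Real.sqrt (5 * (16*t^2 + (3*t + d)^2)) / 2 := by
    rw [le_div_iff₀ (by norm_num : (0:ℝ) < 2), ← Real.sqrt_sq (by linarith : (0:ℝ) ≤ (5*t + d) * 2)]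
    apply Real.sqrt_le_sqrt
    nlinarith [sq_nonneg ((5:ℝ)*t - d)]
  calc 5*t + d ≤ Real.sqrt (5 * (16*t^2 + (3*t + d)^2)) / 2 := key
  _ = Real.sqrt 5 / 2 * Real.sqrt (16*t^2 + (3*t + d)^2) := by
      rw [Real.sqrt_mul (by norm_num)]; ring
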